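/- Let Γ be a group and r ∈ ℕ with r ≤ genrk(Γ). Then there exists a finitely generated subgroup Λ_r of Γ such that intrk^Γ(Λ_r) = r. -/

import Mathlib

open scoped commutatorElement

/-- The mixed commutator length `cl_{G,N}` (∞ if not a product of mixed commutators). -/
noncomputable def clGN {G : Type*} [Group G] (N : Subgroup G) (x : G) : ℕ∞ :=
  sInf {n : ℕ∞ | ∃ k : ℕ, n = k ∧ ∃ g v : Fin k → G, (∀ i, v i ∈ N) ∧
    x = (List.ofFn fun i => ⁅g i, v i⁆).prod}

/-- The rank of a subgroup: minimal size of a generating set. -/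
noncomputable def rk {G : Type*} [Group G] (H : Subgroup G) : ℕ∞ :=
  sInf {n : ℕ∞ | ∃ S : Finset G, Subgroup.closure (S : Set G) = H ∧ n = S.card}

/-- The intermediate rank `intrk^Γ(Λ) = inf {rk Θ | Λ ≤ Θ ≤ Γ}`. -/
noncomputable def intrk {G : Type*} [Group G] (Λ : Subgroup G) : ℕ∞ :=
  sInf {n : ℕ∞ | ∃ Θ : Subgroup G, Λ ≤ Θ ∧ n = rk Θ}

/-- The general rank in the sense of Malcev. -/
noncomputable def genrk (G : Type*) [Group G] : ℕ∞ :=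
  sSup {n : ℕ∞ | ∃ Λ : Subgroup G, Λ.FG ∧ n = intrk Λ}

/-- The special rank in the sense of Malcev. -/
noncomputable def sperk (G : Type*) [Group G] : ℕ∞ :=
  sSup {n : ℕ∞ | ∃ Λ : Subgroup G, Λ.FG ∧ n = rk Λ}

section Aux

open Subgroup

variable {G : Type*} [Group G] [DecidableEq G]

lemma rk_le_card (S : Finset G) : rk (Subgroup.closure (S : Set G)) ≤ S.card :=
  sInf_le ⟨S, rfl, rfl⟩

lemma intrk_le_rk {Λ Θ : Subgroup G} (h : Λ ≤ Θ) : intrk Λ ≤ rk Θ :=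
  sInf_le ⟨Θ, h, rfl⟩

lemma intrk_closure_empty : intrk (Subgroup.closure ((↑(∅ : Finset G)) : Set G)) = 0 := by
  refine le_antisymm ?_ (zero_le)
  refine le_trans (intrk_le_rk le_rfl) ?_
  simpa using rk_le_card (∅ : Finset G)

lemma intrk_insert_le (x : G) (S : Finset G) :
    intrk (Subgroup.closure ((↑(insert x S)) : Set G)) ≤
      intrk (Subgroup.closure (S : Set G)) + 1 := by
  have hne : {n : ℕ∞ | ∃ Θ : Subgroup G, Subgroup.closure (S : Set G) ≤ Θ ∧ n = rk Θ}.Nonempty :=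
    ⟨rk (Subgroup.closure (S : Set G)), Subgroup.closure (S : Set G), le_rfl, rfl⟩
  obtain ⟨Θ, hΘ, hrk⟩ := csInf_mem hne
  have hrk' : intrk (Subgroup.closure (S : Set G)) = rk Θ := hrk
  have hfin : rk Θ ≠ ⊤ := by
    intro h
    have h1 : intrk (Subgroup.closure (S : Set G)) ≤ (S.card : ℕ∞) :=
      le_trans (intrk_le_rk le_rfl) (rk_le_card S)
    rw [hrk', h] at h1
    exact absurd h1 (by simp)
  have hne2 : {n : ℕ∞ | ∃ T : Finset G, Subgroup.closure (T : Set G) = Θ ∧ n = T.card}.Nonempty := by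
    by_contra h
    rw [Set.not_nonempty_iff_eq_empty] at h
    exact hfin (by rw [rk, h, sInf_empty])
  obtain ⟨T, hT, hcard⟩ := csInf_mem hne2
  have hcard' : rk Θ = (T.card : ℕ∞) := hcard
  have hle : Subgroup.closure ((↑(insert x S)) : Set G) ≤
      Subgroup.closure ((↑(insert x T)) : Set G) := by
    rw [Finset.coe_insert, Finset.coe_insert]
    refine (Subgroup.closure_le _).2 ?_
    intro y hy
    rcases hy with hy | hy
    · rw [hy]; exact Subgroup.subset_closure (Set.mem_insert x _)
    · have hyΘ : y ∈ Θ := hΘ (Subgroup.subset_closure hy)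
      rw [← hT] at hyΘ
      exact Subgroup.closure_mono (Set.subset_insert x _) hyΘ
  calc intrk (Subgroup.closure ((↑(insert x S)) : Set G))
      ≤ rk (Subgroup.closure ((↑(insert x T)) : Set G)) := intrk_le_rk hle
    _ ≤ ((insert x T).card : ℕ∞) := rk_le_card _
    _ ≤ ((T.card + 1 : ℕ) : ℕ∞) := by
        exact_mod_cast Nat.cast_le.2 (Finset.card_insert_le x T)
    _ = intrk (Subgroup.closure (S : Set G)) + 1 := by
        rw [Nat.cast_add, Nat.cast_one, hrk', hcard']

lemma intrk_ne_top (S : Finset G) : intrk (Subgroup.closure (S : Set G)) ≠ ⊤ := by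
  intro h
  have h1 : intrk (Subgroup.closure (S : Set G)) ≤ (S.card : ℕ∞) :=
    le_trans (intrk_le_rk le_rfl) (rk_le_card S)
  rw [h] at h1
  exact absurd h1 (by simp)

lemma claim_list (l : List G) (m : ℕ)
    (hm : (m : ℕ∞) ≤ intrk (Subgroup.closure ((↑l.toFinset) : Set G))) :
    ∃ T : Finset G, intrk (Subgroup.closure ((T : Set G))) = m := by
  induction l generalizing m with
  | nil =>
    refine ⟨∅, ?_⟩
    simp only [List.toFinset_nil] at hm
    rw [intrk_closure_empty] at hm ⊢
    exact_mod_cast (nonpos_iff_eq_zero.mp hm).symm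
  | cons x l ih =>
    rw [List.toFinset_cons] at hm
    by_cases h : (m : ℕ∞) ≤ intrk (Subgroup.closure ((↑l.toFinset) : Set G))
    · exact ih m h
    · push_neg at h
      refine ⟨insert x l.toFinset, le_antisymm ?_ hm⟩
      have h2 : intrk (Subgroup.closure ((↑l.toFinset) : Set G)) + 1 ≤ (m : ℕ∞) :=
        (ENat.add_one_le_iff (intrk_ne_top l.toFinset)).2 h
      exact le_trans (intrk_insert_le x l.toFinset) h2

end Aux

/-- every value `r ≤ genrk Γ` is attained as an intermediate rank of a
finitely generated subgroup. -/
theorem exists_fg_subgroup_intrk_eq {Γ : Type*} [Group Γ] (r : ℕ) (hr : (r : ℕ∞) ≤ genrk Γ) :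
    ∃ Λ : Subgroup Γ, Λ.FG ∧ intrk Λ = r := by
  classical
  rcases Nat.eq_zero_or_pos r with h0 | hpos
  · subst h0
    refine ⟨⊥, ⟨∅, by simp⟩, ?_⟩
    have h := intrk_closure_empty (G := Γ)
    simpa using h
  · have hlt' : ((r - 1 : ℕ) : ℕ∞) < genrk Γ :=
      lt_of_lt_of_le (by exact_mod_cast Nat.sub_lt hpos one_pos) hr
    rw [genrk, lt_sSup_iff] at hlt'
    obtain ⟨n, ⟨Λ, hΛfg, rfl⟩, hn⟩ := hlt'
    obtain ⟨S, hS⟩ := hΛfg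
    have hrle : (r : ℕ∞) ≤ intrk Λ := by
      have h1 := (ENat.add_one_le_iff (by simp : ((r - 1 : ℕ) : ℕ∞) ≠ ⊤)).2 hn
      calc (r : ℕ∞) = ((r - 1 + 1 : ℕ) : ℕ∞) := by rw [Nat.sub_add_cancel hpos]
        _ = ((r - 1 : ℕ) : ℕ∞) + 1 := by push_cast; ring
        _ ≤ intrk Λ := h1
    have hset : ((↑S.toList.toFinset) : Set Γ) = ((↑S) : Set Γ) := by
      rw [Finset.toList_toFinset]
    have hrle' : (r : ℕ∞) ≤ intrk (Subgroup.closure ((↑S.toList.toFinset) : Set Γ)) := by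
      rw [hset, hS]; exact hrle
    obtain ⟨T, hT⟩ := claim_list S.toList r hrle'
    exact ⟨Subgroup.closure (T : Set Γ), ⟨T, rfl⟩, hT⟩
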